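/- arXiv:1201.4906 — 3 statements merged into one kernel-verified Lean document; each statement's English description precedes it below -/
import Mathlib

section
/- If X is a zero-mean real random variable whose moment generating function M(u) = E[exp(uX)] is finite for all |u| ≤ u₀ (for some u₀ > 0), then for any ζ ≥ sup{M''(u) : -u₀ ≤ u ≤ u₀}, we have M(u) ≤ exp(ζu²/2) for all |u| ≤ u₀. -/
open MeasureTheory Real Set Filter Topology

lemma aux_pow_le {δ : ℝ} (hδ : 0 < δ) (k : ℕ) (x : ℝ) :
    |x| ^ k ≤ ((k : ℝ) / δ) ^ k * Real.exp (δ * |x|) := by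
  rcases Nat.eq_zero_or_pos k with hk | hk
  · subst hk
    simpa using Real.one_le_exp (by positivity)
  · have hk' : (0:ℝ) < k := by exact_mod_cast hk
    have h1 : |x| ≤ (k / δ) * Real.exp (δ / k * |x|) := by
      have := Real.add_one_le_exp (δ / k * |x|)
      have h2 : δ / k * |x| ≤ Real.exp (δ / k * |x|) := by linarith
      calc |x| = (k / δ) * (δ / k * |x|) := by field_simp
        _ ≤ (k / δ) * Real.exp (δ / k * |x|) := by
            apply mul_le_mul_of_nonneg_left h2 (by positivity)
    calc |x| ^ k ≤ ((k / δ) * Real.exp (δ / k * |x|)) ^ k :=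
          pow_le_pow_left₀ (abs_nonneg x) h1 k
      _ = ((k:ℝ) / δ) ^ k * Real.exp (δ / k * |x|) ^ k := by rw [mul_pow]
      _ = ((k:ℝ) / δ) ^ k * Real.exp (δ * |x|) := by
          rw [← Real.exp_nat_mul]
          congr 1
          field_simp

lemma aux_exp_abs_le {u₀ x : ℝ} (hu₀ : 0 ≤ u₀) :
    Real.exp (u₀ * |x|) ≤ Real.exp (u₀ * x) + Real.exp (-(u₀ * x)) := by
  rcases abs_cases x with ⟨h, _⟩ | ⟨h, _⟩ <;> rw [h]
  · have := (Real.exp_pos (-(u₀ * x))).le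
    linarith
  · have := (Real.exp_pos (u₀ * x)).le
    have : u₀ * -x = -(u₀ * x) := by ring
    rw [this]
    have := (Real.exp_pos (u₀ * x)).le
    linarith

lemma key_int {Ω : Type*} [MeasureSpace Ω] [IsProbabilityMeasure (volume : Measure Ω)]
    {X : Ω → ℝ} (hX : Measurable X) {u₀ : ℝ}
    (hint : ∀ u : ℝ, |u| ≤ u₀ → Integrable (fun ω => Real.exp (u * X ω)))
    {r : ℝ} (hr : |r| < u₀) (k : ℕ) :
    Integrable (fun ω => |X ω| ^ k * Real.exp (r * X ω)) := by
  have hu₀ : 0 < u₀ := lt_of_le_of_lt (abs_nonneg r) hr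
  set δ : ℝ := u₀ - |r| with hδdef
  have hδ : 0 < δ := by simp [hδdef]; linarith
  set C : ℝ := ((k : ℝ) / δ) ^ k with hC
  have hg : Integrable (fun ω => C * (Real.exp (u₀ * X ω) + Real.exp (-(u₀ * X ω)))) := by
    refine Integrable.const_mul ?_ C
    refine (hint u₀ (by rw [abs_of_pos hu₀])).add ?_
    have := hint (-u₀) (by rw [abs_neg, abs_of_pos hu₀])
    simpa [neg_mul] using this
  refine hg.mono ?_ ?_
  · exact ((hX.abs.pow_const k).mul (Real.measurable_exp.comp (hX.const_mul r))).aestronglyMeasurable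
  · filter_upwards with ω
    set x := X ω
    have h1 : |x| ^ k ≤ C * Real.exp (δ * |x|) := aux_pow_le hδ k x
    have h2 : Real.exp (r * x) ≤ Real.exp (|r| * |x|) :=
      Real.exp_le_exp.mpr ((le_abs_self _).trans (by rw [abs_mul]))
    have h3 : Real.exp (u₀ * |x|) ≤ Real.exp (u₀ * x) + Real.exp (-(u₀ * x)) :=
      aux_exp_abs_le hu₀.le
    have hnn : (0:ℝ) ≤ |x| ^ k * Real.exp (r * x) := by positivity
    rw [Real.norm_of_nonneg hnn, Real.norm_of_nonneg (by positivity)]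
    calc |x| ^ k * Real.exp (r * x)
        ≤ (C * Real.exp (δ * |x|)) * Real.exp (|r| * |x|) := by
          apply mul_le_mul h1 h2 (Real.exp_pos _).le
          positivity
      _ = C * Real.exp (u₀ * |x|) := by
          rw [mul_assoc, ← Real.exp_add]
          congr 2
          simp [hδdef]; ring
      _ ≤ C * (Real.exp (u₀ * x) + Real.exp (-(u₀ * x))) := by
          apply mul_le_mul_of_nonneg_left h3
          positivity

lemma key_deriv {Ω : Type*} [MeasureSpace Ω] [IsProbabilityMeasure (volume : Measure Ω)]
    {X : Ω → ℝ} (hX : Measurable X) {u₀ : ℝ}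
    (hint : ∀ u : ℝ, |u| ≤ u₀ → Integrable (fun ω => Real.exp (u * X ω)))
    (k : ℕ) {u : ℝ} (hu : |u| < u₀) :
    HasDerivAt (fun v => ∫ ω, (X ω) ^ k * Real.exp (v * X ω))
      (∫ ω, (X ω) ^ (k + 1) * Real.exp (u * X ω)) u := by
  have hu₀ : 0 < u₀ := lt_of_le_of_lt (abs_nonneg u) hu
  set ε : ℝ := (u₀ - |u|) / 2 with hε
  have hε0 : 0 < ε := by simp [hε]; linarith
  set r : ℝ := |u| + ε with hrdef
  have hr0 : 0 ≤ r := by positivity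
  have hru : r < u₀ := by simp [hrdef, hε]; linarith
  have hrabs : |r| < u₀ := by rwa [abs_of_nonneg hr0]
  have hmeas : ∀ (m : ℕ) (v : ℝ),
      AEStronglyMeasurable (fun ω => (X ω) ^ m * Real.exp (v * X ω)) volume :=
    fun m v => ((hX.pow_const m).mul
      (Real.measurable_exp.comp (hX.const_mul v))).aestronglyMeasurable
  have hintk : ∀ (m : ℕ) {c : ℝ}, |c| < u₀ →
      Integrable (fun ω => (X ω) ^ m * Real.exp (c * X ω)) := by
    intro m c hc
    refine (key_int hX hint hc m).mono (hmeas m c) ?_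
    filter_upwards with ω
    simp [norm_mul, norm_pow, abs_abs]
  have key := hasDerivAt_integral_of_dominated_loc_of_deriv_le (μ := volume)
    (F := fun v ω => (X ω) ^ k * Real.exp (v * X ω))
    (F' := fun v ω => (X ω) ^ (k + 1) * Real.exp (v * X ω))
    (bound := fun ω => |X ω| ^ (k + 1) * (Real.exp (r * X ω) + Real.exp (-(r * X ω))))
    (Metric.ball_mem_nhds u hε0) (Eventually.of_forall fun v => hmeas k v) (hintk k hu) (hmeas (k+1) u)
    ?_ ?_ ?_
  · exact key.2
  · filter_upwards with ω v hv
    have hvr : |v| ≤ r := by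
      have h0 : |v - u| < ε := by
        have := mem_ball_iff_norm.mp hv
        rwa [Real.norm_eq_abs] at this
      have h1 : v = u + (v - u) := by ring
      rw [hrdef, h1]
      exact (abs_add_le _ _).trans (by linarith)
    rw [norm_mul, norm_pow, Real.norm_eq_abs, Real.norm_of_nonneg (Real.exp_pos _).le]
    have h2 : Real.exp (v * X ω) ≤ Real.exp (r * X ω) + Real.exp (-(r * X ω)) := by
      have hb : v * X ω ≤ r * |X ω| := by
        calc v * X ω ≤ |v * X ω| := le_abs_self _
          _ = |v| * |X ω| := abs_mul _ _
          _ ≤ r * |X ω| := mul_le_mul_of_nonneg_right hvr (abs_nonneg _)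
      exact (Real.exp_le_exp.mpr hb).trans (aux_exp_abs_le (x := X ω) hr0)
    exact mul_le_mul_of_nonneg_left h2 (by positivity)
  · have h1 := key_int hX hint hrabs (k + 1)
    have h2 := key_int hX hint (r := -r) (by rwa [abs_neg]) (k + 1)
    have := h1.add h2
    simp only [neg_mul] at h2 ⊢
    simp only [mul_add]
    exact h1.add h2
  · filter_upwards with ω v _
    have : HasDerivAt (fun v => Real.exp (v * X ω)) (Real.exp (v * X ω) * X ω) v :=
      (hasDerivAt_mul_const (X ω)).exp
    have := this.const_mul ((X ω) ^ k)
    refine this.congr_deriv ?_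
    rw [pow_succ]
    ring

/-- If `X` is a zero-mean random variable whose mgf `M u = E[exp (u X)]` is finite for all
`|u| ≤ u₀`, then for any `ζ` at least the supremum of the second derivative of `M` on
`[-u₀, u₀]`, we have `M u ≤ exp (ζ u² / 2)` for all `|u| ≤ u₀`. -/
theorem stmt0 {Ω : Type*} [MeasureSpace Ω] [IsProbabilityMeasure (volume : Measure Ω)]
    (X : Ω → ℝ) (hXmeas : Measurable X) (hmean : ∫ ω, X ω = 0)
    (u₀ : ℝ) (hu₀ : 0 < u₀)
    (M : ℝ → ℝ) (hM : ∀ u, M u = ∫ ω, Real.exp (u * X ω))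
    (hint : ∀ u : ℝ, |u| ≤ u₀ → Integrable (fun ω => Real.exp (u * X ω)))
    (ζ : ℝ) (hζ : ∀ u ∈ Icc (-u₀) u₀, iteratedDeriv 2 M u ≤ ζ) :
    ∀ u : ℝ, |u| ≤ u₀ → M u ≤ Real.exp (ζ * u ^ 2 / 2) := by
  set D1 : ℝ → ℝ := fun v => ∫ ω, (X ω) * Real.exp (v * X ω) with hD1def
  set D2 : ℝ → ℝ := fun v => ∫ ω, (X ω) ^ 2 * Real.exp (v * X ω) with hD2def
  have hmemabs : ∀ v : ℝ, v ∈ Ioo (-u₀) u₀ → |v| < u₀ := fun v hv => abs_lt.mpr ⟨hv.1, hv.2⟩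
  have hMeq : M = fun v => ∫ ω, Real.exp (v * X ω) := funext hM
  have hMder : ∀ v ∈ Ioo (-u₀) u₀, HasDerivAt M (D1 v) v := by
    intro v hv
    have h := key_deriv hXmeas hint 0 (hmemabs v hv)
    simp only [pow_zero, one_mul, zero_add, pow_one] at h
    rw [hMeq]
    exact h
  have hD1der : ∀ v ∈ Ioo (-u₀) u₀, HasDerivAt D1 (D2 v) v := by
    intro v hv
    have h := key_deriv hXmeas hint 1 (hmemabs v hv)
    simpa only [pow_one, hD1def, hD2def] using h
  have hD2le : ∀ v ∈ Ioo (-u₀) u₀, D2 v ≤ ζ := by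
    intro v hv
    have h1 : deriv (deriv M) v = deriv D1 v := by
      apply Filter.EventuallyEq.deriv_eq
      filter_upwards [isOpen_Ioo.mem_nhds hv] with w hw
      exact (hMder w hw).deriv
    have h2 : deriv D1 v = D2 v := (hD1der v hv).deriv
    have h3 := hζ v (Ioo_subset_Icc_self hv)
    rwa [show (2:ℕ) = 1 + 1 from rfl, iteratedDeriv_succ, iteratedDeriv_one, h1, h2] at h3
  have hM0 : M 0 = 1 := by
    rw [hM]; simp
  have hD10 : D1 0 = 0 := by
    simp only [hD1def, zero_mul, Real.exp_zero, mul_one]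
    exact hmean
  set ψ : ℝ → ℝ := fun t => D1 t - ζ * t with hψdef
  have hψder : ∀ t ∈ Ioo (-u₀) u₀, HasDerivAt ψ (D2 t - ζ) t := by
    intro t ht
    have h := (hD1der t ht).sub ((hasDerivAt_id t).const_mul ζ)
    exact h.congr_deriv (by simp)
  have hψanti : AntitoneOn ψ (Ioo (-u₀) u₀) := by
    apply antitoneOn_of_deriv_nonpos (convex_Ioo _ _)
    · exact fun t ht => (hψder t ht).continuousAt.continuousWithinAt
    · rw [interior_Ioo]
      exact fun t ht => (hψder t ht).differentiableAt.differentiableWithinAt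
    · rw [interior_Ioo]
      intro t ht
      rw [(hψder t ht).deriv]
      linarith [hD2le t ht]
  have h0mem : (0:ℝ) ∈ Ioo (-u₀) u₀ := ⟨by linarith, hu₀⟩
  have hψ0 : ψ 0 = 0 := by simp [hψdef, hD10]
  set φ : ℝ → ℝ := fun t => M t - (1 + ζ * t ^ 2 / 2) with hφdef
  have hφder : ∀ t ∈ Ioo (-u₀) u₀, HasDerivAt φ (ψ t) t := by
    intro t ht
    have h1 : HasDerivAt (fun t : ℝ => 1 + ζ * t ^ 2 / 2) (ζ * t) t := by
      have h2 : HasDerivAt (fun t : ℝ => t ^ 2) (2 * t) t := by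
        simpa using hasDerivAt_pow 2 t
      have h3 := ((h2.const_mul ζ).div_const 2).const_add 1
      exact h3.congr_deriv (by ring)
    exact (hMder t ht).sub h1
  have hφ0 : φ 0 = 0 := by simp [hφdef, hM0]
  have hkey : ∀ v ∈ Ioo (-u₀) u₀, M v ≤ Real.exp (ζ * v ^ 2 / 2) := by
    intro v hv
    have hφle : φ v ≤ 0 := by
      rcases le_total 0 v with h | h
      · have hsub : Icc (0:ℝ) v ⊆ Ioo (-u₀) u₀ := fun t ht =>
          ⟨lt_of_lt_of_le (by linarith) ht.1, lt_of_le_of_lt ht.2 hv.2⟩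
        have hanti : AntitoneOn φ (Icc 0 v) := by
          apply antitoneOn_of_deriv_nonpos (convex_Icc _ _)
          · exact fun t ht => (hφder t (hsub ht)).continuousAt.continuousWithinAt
          · rw [interior_Icc]
            exact fun t ht =>
              (hφder t (hsub (Ioo_subset_Icc_self ht))).differentiableAt.differentiableWithinAt
          · rw [interior_Icc]
            intro t ht
            rw [(hφder t (hsub (Ioo_subset_Icc_self ht))).deriv]
            have := hψanti h0mem (hsub (Ioo_subset_Icc_self ht)) ht.1.le
            linarith [hψ0 ▸ this]
        have := hanti (left_mem_Icc.mpr h) (right_mem_Icc.mpr h) h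
        rw [hφ0] at this
        exact this
      · have hsub : Icc v (0:ℝ) ⊆ Ioo (-u₀) u₀ := fun t ht =>
          ⟨lt_of_lt_of_le hv.1 ht.1, lt_of_le_of_lt ht.2 hu₀⟩
        have hmono : MonotoneOn φ (Icc v 0) := by
          apply monotoneOn_of_deriv_nonneg (convex_Icc _ _)
          · exact fun t ht => (hφder t (hsub ht)).continuousAt.continuousWithinAt
          · rw [interior_Icc]
            exact fun t ht =>
              (hφder t (hsub (Ioo_subset_Icc_self ht))).differentiableAt.differentiableWithinAt
          · rw [interior_Icc]
            intro t ht
            rw [(hφder t (hsub (Ioo_subset_Icc_self ht))).deriv]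
            have := hψanti (hsub (Ioo_subset_Icc_self ht)) h0mem ht.2.le
            linarith [hψ0 ▸ this]
        have := hmono (left_mem_Icc.mpr h) (right_mem_Icc.mpr h) h
        rw [hφ0] at this
        exact this
    have hexp := Real.add_one_le_exp (ζ * v ^ 2 / 2)
    have : M v - (1 + ζ * v ^ 2 / 2) ≤ 0 := hφle
    linarith
  intro u hu
  have humem : u ∈ Icc (-u₀) u₀ := by
    have := abs_le.mp hu
    exact ⟨this.1, this.2⟩
  have hclos : u ∈ closure (Ioo (-u₀) u₀) := by
    rw [closure_Ioo (show -u₀ ≠ u₀ by intro h; linarith)]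
    exact humem
  have hne : (𝓝[Ioo (-u₀) u₀] u).NeBot := mem_closure_iff_nhdsWithin_neBot.mp hclos
  have hMcont : ContinuousWithinAt M (Icc (-u₀) u₀) u := by
    rw [hMeq]
    apply continuousWithinAt_of_dominated
      (bound := fun ω => Real.exp (u₀ * X ω) + Real.exp (-(u₀ * X ω)))
    · exact Eventually.of_forall fun v =>
        (Real.measurable_exp.comp (hXmeas.const_mul v)).aestronglyMeasurable
    · filter_upwards [self_mem_nhdsWithin] with v hv
      filter_upwards with ω
      rw [Real.norm_of_nonneg (Real.exp_pos _).le]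
      have hvle : |v| ≤ u₀ := abs_le.mpr ⟨hv.1, hv.2⟩
      have hb : v * X ω ≤ u₀ * |X ω| := by
        calc v * X ω ≤ |v * X ω| := le_abs_self _
          _ = |v| * |X ω| := abs_mul _ _
          _ ≤ u₀ * |X ω| := mul_le_mul_of_nonneg_right hvle (abs_nonneg _)
      exact (Real.exp_le_exp.mpr hb).trans (aux_exp_abs_le hu₀.le)
    · refine (hint u₀ (by rw [abs_of_pos hu₀])).add ?_
      have := hint (-u₀) (by rw [abs_neg, abs_of_pos hu₀])
      simpa [neg_mul] using this
    · filter_upwards with ω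
      exact (Real.continuous_exp.comp (continuous_id.mul continuous_const)).continuousWithinAt
  have hMt : Tendsto M (𝓝[Ioo (-u₀) u₀] u) (𝓝 (M u)) :=
    hMcont.tendsto.mono_left (nhdsWithin_mono u Ioo_subset_Icc_self)
  have hgt : Tendsto (fun v => Real.exp (ζ * v ^ 2 / 2)) (𝓝[Ioo (-u₀) u₀] u)
      (𝓝 (Real.exp (ζ * u ^ 2 / 2))) := by
    apply (Continuous.tendsto ?_ u).mono_left nhdsWithin_le_nhds
    continuity
  refine le_of_tendsto_of_tendsto hMt hgt ?_
  filter_upwards [self_mem_nhdsWithin] with v hv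
  exact hkey v hv
end

section
/- Every compact subset A of ℝ^d whose linear span has dimension d admits a barycentric spanner: there exist x₁,...,x_d ∈ A such that every x ∈ A can be written as x = Σᵢ aᵢxᵢ with coefficients aᵢ ∈ [-1, 1]. -/
open Finset Set
open Matrix

noncomputable section

noncomputable section

private def matOf {d : ℕ} (b : Fin d → EuclideanSpace ℝ (Fin d)) : Matrix (Fin d) (Fin d) ℝ :=
  Matrix.of fun i j => b i j

private lemma matOf_cont {d : ℕ} :
    Continuous fun b : Fin d → EuclideanSpace ℝ (Fin d) => |(matOf b).det| := by
  apply Continuous.abs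
  apply Continuous.matrix_det
  apply continuous_matrix
  exact fun i j => (EuclideanSpace.proj j).continuous.comp (continuous_apply i)

private lemma li_iff_det {d : ℕ} (b : Fin d → EuclideanSpace ℝ (Fin d)) :
    LinearIndependent ℝ b ↔ (matOf b).det ≠ 0 := by
  have h1 : LinearIndependent ℝ b ↔ LinearIndependent ℝ (matOf b).row := by
    constructor
    · intro h
      exact h.map' (WithLp.linearEquiv 2 ℝ (Fin d → ℝ)).toLinearMap (LinearEquiv.ker _)
    · intro h
      exact h.map' (WithLp.linearEquiv 2 ℝ (Fin d → ℝ)).symm.toLinearMap (LinearEquiv.ker _)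
  rw [h1, Matrix.linearIndependent_rows_iff_isUnit, Matrix.isUnit_iff_isUnit_det,
    isUnit_iff_ne_zero]

private lemma cram {d : ℕ} (b : Fin d → EuclideanSpace ℝ (Fin d)) (a : Fin d → ℝ)
    (x : EuclideanSpace ℝ (Fin d)) (hx : x = ∑ j, a j • b j) (i : Fin d) :
    (matOf (Function.update b i x)).det = (matOf b).det * a i := by
  set M := matOf b with hM
  have hv : (Mᵀ *ᵥ a) = fun k => x k := by
    funext k
    have hxk : x k = ∑ j, a j * b j k := by
      rw [hx]
      rw [show ((∑ j, a j • b j : EuclideanSpace ℝ (Fin d)) k)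
          = (EuclideanSpace.proj (𝕜 := ℝ) k) (∑ j, a j • b j) from rfl, map_sum]
      simp [smul_eq_mul]
    rw [hxk]
    simp [Matrix.mulVec, dotProduct, hM, matOf, mul_comm]
  have h1 : Matrix.cramer Mᵀ (Mᵀ *ᵥ a) = Mᵀ.det • a := by
    rw [Matrix.cramer_eq_adjugate_mulVec, Matrix.mulVec_mulVec, Matrix.adjugate_mul,
      Matrix.smul_mulVec, Matrix.one_mulVec]
  have h2 := congrFun h1 i
  rw [Matrix.cramer_apply, hv] at h2
  have h3 : matOf (Function.update b i x) = (Mᵀ.updateCol i fun k => x k)ᵀ := by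
    ext p q
    by_cases hp : p = i <;>
      simp [matOf, Matrix.updateCol_apply, Matrix.transpose_apply, hp,
        Function.update_apply, hM]
  rw [h3, Matrix.det_transpose, h2, Matrix.det_transpose]
  simp

/-- Every nonempty compact subset of `ℝ^d` that spans `ℝ^d` admits a barycentric spanner:
`d` points of the set such that every point of the set is a linear combination of them with
coefficients in `[-1, 1]`. -/
theorem stmt5 (d : ℕ) (A : Set (EuclideanSpace ℝ (Fin d)))
    (hA : IsCompact A) (hne : A.Nonempty)
    (hspan : Submodule.span ℝ A = ⊤) :
    ∃ b : Fin d → EuclideanSpace ℝ (Fin d),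
      (∀ i, b i ∈ A) ∧
        ∀ x ∈ A, ∃ a : Fin d → ℝ, (∀ i, |a i| ≤ 1) ∧ x = ∑ i, a i • b i := by
  classical
  obtain ⟨x0, hx0⟩ := hne
  have hK : IsCompact (Set.univ.pi fun _ : Fin d => A) := isCompact_univ_pi fun _ => hA
  have hKne : (Set.univ.pi fun _ : Fin d => A).Nonempty := ⟨fun _ => x0, fun i _ => hx0⟩
  obtain ⟨b, hbmem, hbmax⟩ := hK.exists_isMaxOn hKne matOf_cont.continuousOn
  have hbA : ∀ i, b i ∈ A := fun i => hbmem i (Set.mem_univ i)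
  -- some tuple from A with nonzero determinant
  obtain ⟨s, hsA, hsp, hli⟩ := exists_linearIndependent ℝ A
  rw [hspan] at hsp
  have hfin : s.Finite := hli.setFinite
  haveI : Fintype s := hfin.fintype
  have hB : Module.Basis s ℝ (EuclideanSpace ℝ (Fin d)) := Module.Basis.mk hli (by rw [Subtype.range_val]; exact hsp.ge)
  have hcard : Fintype.card s = d := by
    have h := Module.finrank_eq_card_basis hB
    rw [finrank_euclideanSpace_fin] at h
    omega
  let e : s ≃ Fin d := Fintype.equivFinOfCardEq hcard
  set c : Fin d → EuclideanSpace ℝ (Fin d) := fun i => ((e.symm i : s) : EuclideanSpace ℝ (Fin d))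
  have hcli : LinearIndependent ℝ c := hli.comp e.symm e.symm.injective
  have hcmem : c ∈ Set.univ.pi fun _ : Fin d => A := fun i _ => hsA (e.symm i).2
  have hdet : (matOf b).det ≠ 0 := by
    intro h0
    have hle := hbmax hcmem
    have : (matOf c).det ≠ 0 := (li_iff_det c).mp hcli
    simp only [h0, abs_zero] at hle
    exact this (abs_eq_zero.mp (le_antisymm hle (abs_nonneg _)))
  -- b is a basis
  have hbli : LinearIndependent ℝ b := (li_iff_det b).mpr hdet
  have hbspan : Submodule.span ℝ (Set.range b) = ⊤ :=
    hbli.span_eq_top_of_card_eq_finrank' (by simp [finrank_euclideanSpace_fin])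
  let B : Module.Basis (Fin d) ℝ (EuclideanSpace ℝ (Fin d)) := Module.Basis.mk hbli (by rw [hbspan])
  refine ⟨b, hbA, fun x hx => ?_⟩
  refine ⟨fun i => B.repr x i, fun i => ?_, ?_⟩
  · -- coefficient bound
    have hxsum : x = ∑ j, B.repr x j • b j := by
      conv_lhs => rw [← B.sum_repr x]
      simp [B, Module.Basis.coe_mk]
    have hcr := cram b (fun j => B.repr x j) x hxsum i
    have hupd : Function.update b i x ∈ Set.univ.pi fun _ : Fin d => A := by
      intro j _
      rcases eq_or_ne j i with rfl | hj
      · simpa using hx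
      · simpa [Function.update_apply, hj] using hbA j
    have hle : |(matOf (Function.update b i x)).det| ≤ |(matOf b).det| := hbmax hupd
    rw [hcr, abs_mul] at hle
    have hpos : 0 < |(matOf b).det| := abs_pos.mpr hdet
    nlinarith [abs_nonneg (B.repr x i)]
  · have := B.sum_repr x
    conv_lhs => rw [← this]
    simp [B, Module.Basis.coe_mk]
end
end
end

section
/- Let B = {x₁,...,x_d} be a barycentric spanner of a finite set A ⊂ ℝ^d, let θ ∈ ℝ^d be a true cost vector with unique minimizer x* = argmin_{x∈A} ⟨θ,x⟩, and let c > 0 satisfy ⟨θ,x⟩ - ⟨θ,x*⟩ ≥ c for all x ∈ A with x ≠ x*. If an estimate θ̂ satisfies |⟨θ̂,xᵢ⟩ - ⟨θ,xᵢ⟩| < c/(2d) for all i = 1,...,d, then the linearly interpolated estimates satisfy argmin_{x∈A} ⟨θ̂,x⟩ = x*. -/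
open Finset

/-- If `{x₁, …, x_d}` is a barycentric spanner of a finite set `A ⊆ ℝ^d`, `x*` uniquely
minimizes the true cost `⟨θ, ·⟩` over `A` with optimality gap at least `c`, and the
estimate `θ̂` is within `c/(2d)` of `θ` on each spanner element, then `x*` is the unique
minimizer of the estimated cost `⟨θ̂, ·⟩` over `A`. -/
theorem stmt7 (d : ℕ) (hd : 0 < d) (A : Finset (EuclideanSpace ℝ (Fin d)))
    (b : Fin d → EuclideanSpace ℝ (Fin d)) (hbA : ∀ i, b i ∈ A)
    (hspanner : ∀ x ∈ A, ∃ a : Fin d → ℝ, (∀ i, |a i| ≤ 1) ∧ x = ∑ i, a i • b i)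
    (θ θhat : EuclideanSpace ℝ (Fin d)) (xstar : EuclideanSpace ℝ (Fin d))
    (hxstar : xstar ∈ A) (c : ℝ) (hc : 0 < c)
    (hgap : ∀ x ∈ A, x ≠ xstar → (inner ℝ θ xstar : ℝ) + c ≤ inner ℝ θ x)
    (hclose : ∀ i, |(inner ℝ θhat (b i) : ℝ) - inner ℝ θ (b i)| < c / (2 * d)) :
    ∀ x ∈ A, x ≠ xstar → (inner ℝ θhat xstar : ℝ) < inner ℝ θhat x := by
  have key : ∀ x ∈ A, |(inner ℝ θhat x : ℝ) - inner ℝ θ x| < c / 2 := by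
    intro x hx
    obtain ⟨a, ha, hxa⟩ := hspanner x hx
    have hexp : (inner ℝ θhat x : ℝ) - inner ℝ θ x
        = ∑ i, a i * ((inner ℝ θhat (b i) : ℝ) - inner ℝ θ (b i)) := by
      subst hxa
      simp [inner_sum, real_inner_smul_right, mul_sub, Finset.sum_sub_distrib, Finset.mul_sum, mul_comm, mul_left_comm]
    rw [hexp]
    calc |∑ i, a i * ((inner ℝ θhat (b i) : ℝ) - inner ℝ θ (b i))|
        ≤ ∑ i, |a i * ((inner ℝ θhat (b i) : ℝ) - inner ℝ θ (b i))| :=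
          Finset.abs_sum_le_sum_abs _ _
      _ < ∑ _i : Fin d, c / (2 * d) := by
          apply Finset.sum_lt_sum_of_nonempty
          · exact Finset.univ_nonempty_iff.mpr (Fin.pos_iff_nonempty.mp hd)
          · intro i _
            rw [abs_mul]
            calc |a i| * |(inner ℝ θhat (b i) : ℝ) - inner ℝ θ (b i)|
                ≤ 1 * |(inner ℝ θhat (b i) : ℝ) - inner ℝ θ (b i)| := by
                  apply mul_le_mul_of_nonneg_right (ha i) (abs_nonneg _)
              _ = |(inner ℝ θhat (b i) : ℝ) - inner ℝ θ (b i)| := one_mul _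
              _ < c / (2 * d) := hclose i
      _ = c / 2 := by
          rw [Finset.sum_const, Finset.card_univ, Fintype.card_fin, nsmul_eq_mul]
          field_simp
  intro x hx hne
  have h1 := key x hx
  have h2 := key xstar hxstar
  have h3 := hgap x hx hne
  rw [abs_lt] at h1 h2
  linarith [h1.1, h1.2, h2.1, h2.2]
end
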